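/- Let f ∈ C^1(ℝ^d) with f and ∇f integrable, V ∈ C^1 with bounded derivative, T_t(x) = x + tV(x), and Ω ⊂ ℝ^d a bounded measurable set. Define J(Ω) := ∫_Ω f dx. Then the shape derivative dJ(Ω; V) := lim_{t→0} (J(T_t(Ω)) − J(Ω))/t exists and equals ∫_Ω (∇f · V + f div V) dx. -/

import Mathlib

open MeasureTheory Set
open scoped Topology
set_option maxHeartbeats 2000000

lemma detPiBound {d : ℕ} (m : ∀ _ : Fin d, Fin d → ℝ) :
    ‖(Matrix.detRowAlternating :
        (Fin d → ℝ) [⋀^Fin d]→ₗ[ℝ] ℝ).toMultilinearMap m‖ ≤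
      (d.factorial : ℝ) * ∏ i, ‖m i‖ := by
  have h : (Matrix.detRowAlternating :
      (Fin d → ℝ) [⋀^Fin d]→ₗ[ℝ] ℝ).toMultilinearMap m = Matrix.det (Matrix.of m) := rfl
  rw [h, Matrix.det_apply, Real.norm_eq_abs]
  refine (Finset.abs_sum_le_sum_abs _ _).trans ?_
  have key : ∀ σ : Equiv.Perm (Fin d),
      |Equiv.Perm.sign σ • ∏ i, Matrix.of m (σ i) i| ≤ ∏ i, ‖m i‖ := by
    intro σ
    have h1 : |Equiv.Perm.sign σ • ∏ i, Matrix.of m (σ i) i| = |∏ i, Matrix.of m (σ i) i| := by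
      rcases Int.units_eq_one_or (Equiv.Perm.sign σ) with h | h <;> simp [h]
    rw [h1, Finset.abs_prod]
    have h2 : ∀ i : Fin d, |Matrix.of m (σ i) i| ≤ ‖m (σ i)‖ := by
      intro i
      simpa [Real.norm_eq_abs] using norm_le_pi_norm (m (σ i)) i
    calc ∏ i, |Matrix.of m (σ i) i| ≤ ∏ i, ‖m (σ i)‖ :=
          Finset.prod_le_prod (fun i _ => abs_nonneg _) (fun i _ => h2 i)
      _ = ∏ i, ‖m i‖ := Equiv.prod_comp σ (fun i => ‖m i‖)
  calc ∑ σ : Equiv.Perm (Fin d), |Equiv.Perm.sign σ • ∏ i, Matrix.of m (σ i) i|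
      ≤ ∑ _σ : Equiv.Perm (Fin d), ∏ i, ‖m i‖ := Finset.sum_le_sum (fun σ _ => key σ)
    _ = (d.factorial : ℝ) * ∏ i, ‖m i‖ := by
        simp [Finset.card_univ, Fintype.card_perm]

lemma detPiDiff {d : ℕ} (m₁ m₂ : ∀ _ : Fin d, Fin d → ℝ) :
    |Matrix.det (Matrix.of m₁) - Matrix.det (Matrix.of m₂)| ≤
      (d.factorial : ℝ) * d * max ‖m₁‖ ‖m₂‖ ^ (d - 1) * ‖m₁ - m₂‖ := by
  have := MultilinearMap.norm_image_sub_le_of_bound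
    (Matrix.detRowAlternating :
        (Fin d → ℝ) [⋀^Fin d]→ₗ[ℝ] ℝ).toMultilinearMap
    (by positivity : (0:ℝ) ≤ (d.factorial : ℝ)) detPiBound m₁ m₂
  rw [← Real.norm_eq_abs]; simp only [Fintype.card_fin] at this; exact this


/-- Shape derivative of the volume functional `J(Ω) = ∫_Ω f dx` under the perturbation of
identity `T_t = id + tV`:  `dJ(Ω; V) = ∫_Ω (∇f · V + f div V) dx`. -/
theorem stmt_5 {d : ℕ}
    (f : EuclideanSpace ℝ (Fin d) → ℝ) (hf : ContDiff ℝ 1 f)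
    (hfi : Integrable f) (hgi : Integrable (fun x => gradient f x))
    (V : EuclideanSpace ℝ (Fin d) → EuclideanSpace ℝ (Fin d)) (hV : ContDiff ℝ 1 V)
    (hVb : ∃ C, ∀ x, ‖fderiv ℝ V x‖ ≤ C)
    (Ω : Set (EuclideanSpace ℝ (Fin d))) (hΩm : MeasurableSet Ω) (hΩb : Bornology.IsBounded Ω) :
    HasDerivAt (fun t : ℝ => ∫ x in (fun x => x + t • V x) '' Ω, f x)
      (∫ x in Ω, (inner ℝ (gradient f x) (V x)
        + f x * LinearMap.trace ℝ _ (fderiv ℝ V x : EuclideanSpace ℝ (Fin d) →ₗ[ℝ] EuclideanSpace ℝ (Fin d)))) 0 := by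
  classical
  obtain ⟨C₀, hC₀⟩ := hVb
  set C : ℝ := max C₀ 0 with hCdef
  have hC : ∀ x, ‖fderiv ℝ V x‖ ≤ C := fun x => (hC₀ x).trans (le_max_left _ _)
  have hC0 : (0:ℝ) ≤ C := le_max_right _ _
  have hVdiff : Differentiable ℝ V := hV.differentiable one_ne_zero
  have hfdiff : Differentiable ℝ f := hf.differentiable one_ne_zero
  set δ : ℝ := (2 * (C + 1))⁻¹ with hδdef
  have hδpos : 0 < δ := by positivity
  have hδC : δ * C < 1 := by
    rw [hδdef]
    rw [inv_mul_lt_iff₀ (by positivity)]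
    nlinarith
  -- injectivity
  have hinj : ∀ t : ℝ, |t| ≤ δ → Function.Injective (fun x : EuclideanSpace ℝ (Fin d) => x + t • V x) := by
    intro t ht x y hxy
    by_contra hne
    have hlip : LipschitzWith (Real.toNNReal C) V := by
      apply lipschitzWith_of_nnnorm_fderiv_le hVdiff
      intro x
      rw [← NNReal.coe_le_coe, coe_nnnorm, Real.coe_toNNReal _ hC0]
      exact hC x
    have h1 : x - y = t • (V y - V x) := by
      have h : x + t • V x = y + t • V y := hxy
      rw [smul_sub, sub_eq_sub_iff_add_eq_add, h, add_comm]
    have hVxy : ‖V y - V x‖ ≤ C * ‖y - x‖ := by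
      have := hlip.dist_le_mul y x
      rw [Real.coe_toNNReal _ hC0, dist_eq_norm, dist_eq_norm] at this
      simpa [norm_sub_rev (V y)] using this
    have h2 : ‖x - y‖ ≤ |t| * (C * ‖y - x‖) := by
      rw [h1, norm_smul, Real.norm_eq_abs]
      exact mul_le_mul_of_nonneg_left hVxy (abs_nonneg t)
    have hpos : 0 < ‖x - y‖ := by
      rw [norm_pos_iff, sub_ne_zero]; exact hne
    rw [norm_sub_rev y x] at h2
    have h3 : |t| * (C * ‖x - y‖) ≤ δ * (C * ‖x - y‖) :=
      mul_le_mul_of_nonneg_right ht (by positivity)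
    nlinarith
  -- matrix setup
  set b := (EuclideanSpace.basisFun (Fin d) ℝ).toBasis with hbdef
  set A : EuclideanSpace ℝ (Fin d) → (EuclideanSpace ℝ (Fin d) →L[ℝ] EuclideanSpace ℝ (Fin d)) := fun x => fderiv ℝ V x with hAdef
  set M : EuclideanSpace ℝ (Fin d) → Matrix (Fin d) (Fin d) ℝ := fun x => LinearMap.toMatrix b b (A x) with hMdef
  have hMentry : ∀ (x : EuclideanSpace ℝ (Fin d)) (i j : Fin d), |M x i j| ≤ C := by
    intro x i j
    have h1 : M x i j
        = inner ℝ ((EuclideanSpace.basisFun (Fin d) ℝ) i) (A x (b j)) := by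
      simp only [hMdef]
      rw [LinearMap.toMatrix_apply, hbdef,
        OrthonormalBasis.coe_toBasis_repr_apply, OrthonormalBasis.repr_apply_apply]
      rfl
    rw [h1]
    have h2 := norm_inner_le_norm (𝕜 := ℝ) ((EuclideanSpace.basisFun (Fin d) ℝ) i) (A x (b j))
    have h3 : ‖(EuclideanSpace.basisFun (Fin d) ℝ) i‖ = 1 :=
      (EuclideanSpace.basisFun (Fin d) ℝ).orthonormal.1 i
    have h4 : ‖b j‖ = 1 := by
      rw [hbdef, OrthonormalBasis.coe_toBasis]
      exact (EuclideanSpace.basisFun (Fin d) ℝ).orthonormal.1 j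
    have h5 : ‖A x (b j)‖ ≤ C := by
      calc ‖A x (b j)‖ ≤ ‖A x‖ * ‖b j‖ := (A x).le_opNorm _
        _ = ‖A x‖ := by rw [h4, mul_one]
        _ ≤ C := hC x
    calc |inner ℝ ((EuclideanSpace.basisFun (Fin d) ℝ) i) (A x (b j))|
        ≤ ‖(EuclideanSpace.basisFun (Fin d) ℝ) i‖ * ‖A x (b j)‖ := by
          simpa [Real.norm_eq_abs] using h2
      _ ≤ C := by rw [h3, one_mul]; exact h5
  have hdet : ∀ (t : ℝ) (x : EuclideanSpace ℝ (Fin d)),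
      (ContinuousLinearMap.id ℝ (EuclideanSpace ℝ (Fin d)) + t • A x).det
        = Matrix.det (1 + t • M x) := by
    intro t x
    have hcoe : ((ContinuousLinearMap.id ℝ (EuclideanSpace ℝ (Fin d)) + t • A x :
        EuclideanSpace ℝ (Fin d) →L[ℝ] EuclideanSpace ℝ (Fin d)) : EuclideanSpace ℝ (Fin d) →ₗ[ℝ] EuclideanSpace ℝ (Fin d)) = LinearMap.id + t • (A x : EuclideanSpace ℝ (Fin d) →ₗ[ℝ] EuclideanSpace ℝ (Fin d)) := by
      ext v
      simp
    show LinearMap.det _ = _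
    rw [hcoe, ← LinearMap.det_toMatrix b, map_add, _root_.map_smul, LinearMap.toMatrix_id]
  -- derivative of the determinant factor at t = 0
  have hφd : ∀ x : EuclideanSpace ℝ (Fin d), HasDerivAt (fun t : ℝ => Matrix.det (1 + t • M x))
      (Matrix.trace (M x)) 0 := by
    intro x
    set Q : Polynomial ℝ :=
      (Matrix.det (1 + (Polynomial.X : Polynomial ℝ) • (M x).map Polynomial.C)).divX.divX with hQ
    have hfun : ∀ t : ℝ, Matrix.det (1 + t • M x)
        = 1 + Matrix.trace (M x) * t + Polynomial.eval t Q * t ^ 2 :=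
      fun t => Matrix.det_one_add_smul t (M x)
    have h1 : HasDerivAt (fun t : ℝ => 1 + Matrix.trace (M x) * t + Polynomial.eval t Q * t ^ 2)
        (Matrix.trace (M x)) 0 := by
      have ha : HasDerivAt (fun t : ℝ => 1 + Matrix.trace (M x) * t) (Matrix.trace (M x)) 0 := by
        simpa using ((hasDerivAt_id (0:ℝ)).const_mul (Matrix.trace (M x))).const_add 1
      have hb : HasDerivAt (fun t : ℝ => Polynomial.eval t Q * t ^ 2) 0 0 := by
        simpa [Pi.mul_def] using (Q.hasDerivAt (0:ℝ)).mul (hasDerivAt_pow 2 (0:ℝ))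
      simpa [Pi.add_def] using ha.add hb
    exact h1.congr_of_eventuallyEq (Filter.Eventually.of_forall hfun)
  have hφpos : ∀ x : EuclideanSpace ℝ (Fin d), ∀ᶠ t in 𝓝 (0:ℝ), 0 < Matrix.det (1 + t • M x) := by
    intro x
    have hc : ContinuousAt (fun t : ℝ => Matrix.det (1 + t • M x)) 0 := (hφd x).continuousAt
    have h1 : ∀ᶠ y in 𝓝 ((fun t : ℝ => Matrix.det (1 + t • M x)) 0), 0 < y := by
      have h0 : (fun t : ℝ => Matrix.det (1 + t • M x)) 0 = 1 := by simp
      rw [h0]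
      exact eventually_gt_nhds zero_lt_one
    exact hc.eventually h1
  have habs : ∀ x : EuclideanSpace ℝ (Fin d), HasDerivAt (fun t : ℝ => |Matrix.det (1 + t • M x)|)
      (Matrix.trace (M x)) 0 :=
    fun x => (hφd x).congr_of_eventuallyEq ((hφpos x).mono fun t ht => abs_of_pos ht)
  have hcurve : ∀ x : EuclideanSpace ℝ (Fin d), HasDerivAt (fun t : ℝ => x + t • V x) (V x) 0 := by
    intro x
    simpa using ((hasDerivAt_id (0:ℝ)).smul_const (V x)).const_add x
  have hg : ∀ x : EuclideanSpace ℝ (Fin d), HasDerivAt (fun t : ℝ => f (x + t • V x)) (fderiv ℝ f x (V x)) 0 := by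
    intro x
    have h := (hfdiff (x + (0:ℝ) • V x)).hasFDerivAt.comp_hasDerivAt 0 (hcurve x)
    simpa [Function.comp_def] using h
  have hgrad : ∀ x : EuclideanSpace ℝ (Fin d), (inner ℝ (gradient f x) (V x) : ℝ) = fderiv ℝ f x (V x) := by
    intro x
    rw [gradient, ← InnerProductSpace.toDual_apply_apply, LinearIsometryEquiv.apply_symm_apply]
  have htrace : ∀ x : EuclideanSpace ℝ (Fin d), Matrix.trace (M x)
      = LinearMap.trace ℝ (EuclideanSpace ℝ (Fin d)) ((A x : EuclideanSpace ℝ (Fin d) →L[ℝ] EuclideanSpace ℝ (Fin d)) : EuclideanSpace ℝ (Fin d) →ₗ[ℝ] EuclideanSpace ℝ (Fin d)) := by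
    intro x
    simp only [hMdef]
    exact (LinearMap.trace_eq_matrix_trace ℝ b _).symm
  have hFderiv : ∀ x : EuclideanSpace ℝ (Fin d),
      HasDerivAt (fun t : ℝ => f (x + t • V x) * |Matrix.det (1 + t • M x)|)
        (inner ℝ (gradient f x) (V x)
          + f x * LinearMap.trace ℝ (EuclideanSpace ℝ (Fin d))
              ((fderiv ℝ V x : EuclideanSpace ℝ (Fin d) →L[ℝ] EuclideanSpace ℝ (Fin d)) : EuclideanSpace ℝ (Fin d) →ₗ[ℝ] EuclideanSpace ℝ (Fin d))) 0 := by
    intro x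
    have h := (hg x).mul (habs x)
    rw [hgrad x, ← htrace x]
    simpa [Pi.mul_def] using h
  -- Lipschitz estimate for the determinant factor
  set gmat : ℝ → EuclideanSpace ℝ (Fin d) → (∀ _ : Fin d, Fin d → ℝ) := fun t x i j => (1 + t • M x) i j with hgmat
  have hgm_det : ∀ (t : ℝ) (x : EuclideanSpace ℝ (Fin d)), Matrix.det (Matrix.of (gmat t x)) = Matrix.det (1 + t • M x) :=
    fun t x => rfl
  have hentry : ∀ (t : ℝ) (x : EuclideanSpace ℝ (Fin d)) (i j : Fin d), |t| ≤ δ → |gmat t x i j| ≤ 2 := by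
    intro t x i j ht
    have h1 : gmat t x i j = (1 : Matrix (Fin d) (Fin d) ℝ) i j + t * M x i j := by
      simp [hgmat, Matrix.add_apply, Matrix.smul_apply, smul_eq_mul]
    rw [h1]
    have h2 : |(1 : Matrix (Fin d) (Fin d) ℝ) i j| ≤ 1 := by
      rw [Matrix.one_apply]
      split <;> simp
    have h3 : |t * M x i j| ≤ δ * C := by
      rw [abs_mul]
      exact mul_le_mul ht (hMentry x i j) (abs_nonneg _) (le_of_lt hδpos)
    calc |(1 : Matrix (Fin d) (Fin d) ℝ) i j + t * M x i j|
        ≤ |(1 : Matrix (Fin d) (Fin d) ℝ) i j| + |t * M x i j| := abs_add_le _ _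
      _ ≤ 1 + δ * C := add_le_add h2 h3
      _ ≤ 2 := by linarith
  have hgnorm : ∀ (t : ℝ) (x : EuclideanSpace ℝ (Fin d)), |t| ≤ δ → ‖gmat t x‖ ≤ 2 := by
    intro t x ht
    rw [pi_norm_le_iff_of_nonneg (by norm_num : (0:ℝ) ≤ 2)]
    intro i
    rw [pi_norm_le_iff_of_nonneg (by norm_num : (0:ℝ) ≤ 2)]
    intro j
    rw [Real.norm_eq_abs]
    exact hentry t x i j ht
  have hgdiff : ∀ (s t : ℝ) (x : EuclideanSpace ℝ (Fin d)), ‖gmat t x - gmat s x‖ ≤ |t - s| * C := by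
    intro s t x
    rw [pi_norm_le_iff_of_nonneg (by positivity : (0:ℝ) ≤ |t - s| * C)]
    intro i
    rw [pi_norm_le_iff_of_nonneg (by positivity : (0:ℝ) ≤ |t - s| * C)]
    intro j
    have h1 : (gmat t x - gmat s x) i j = (t - s) * M x i j := by
      simp only [hgmat, Pi.sub_apply, Matrix.add_apply, Matrix.smul_apply, smul_eq_mul]
      ring
    rw [Real.norm_eq_abs, h1, abs_mul]
    exact mul_le_mul_of_nonneg_left (hMentry x i j) (abs_nonneg _)
  set Kd : ℝ := (d.factorial : ℝ) * d * 2 ^ (d - 1) * C with hKd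
  have hKd0 : 0 ≤ Kd := by positivity
  have hφlip : ∀ (x : EuclideanSpace ℝ (Fin d)) (s t : ℝ), |s| ≤ δ → |t| ≤ δ →
      |Matrix.det (1 + t • M x) - Matrix.det (1 + s • M x)| ≤ Kd * |t - s| := by
    intro x s t hs ht
    have h := detPiDiff (gmat t x) (gmat s x)
    rw [hgm_det, hgm_det] at h
    have hmax : max ‖gmat t x‖ ‖gmat s x‖ ≤ 2 := max_le (hgnorm t x ht) (hgnorm s x hs)
    have hpow : max ‖gmat t x‖ ‖gmat s x‖ ^ (d - 1) ≤ 2 ^ (d - 1) :=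
      pow_le_pow_left₀ (le_max_of_le_left (norm_nonneg _)) hmax _
    calc |Matrix.det (1 + t • M x) - Matrix.det (1 + s • M x)|
        ≤ (d.factorial : ℝ) * d * max ‖gmat t x‖ ‖gmat s x‖ ^ (d - 1) * ‖gmat t x - gmat s x‖ := h
      _ ≤ (d.factorial : ℝ) * d * 2 ^ (d - 1) * (|t - s| * C) := by
          apply mul_le_mul
          · exact mul_le_mul_of_nonneg_left hpow (by positivity)
          · exact hgdiff s t x
          · exact norm_nonneg _
          · positivity
      _ = Kd * |t - s| := by rw [hKd]; ring
  -- bounds on compact sets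
  have hclos : IsCompact (closure Ω) := hΩb.isCompact_closure
  obtain ⟨MV₀, hMV₀⟩ := hclos.exists_bound_of_continuousOn hV.continuous.continuousOn
  set MV : ℝ := max MV₀ 0 with hMVdef
  have hMV0 : (0:ℝ) ≤ MV := le_max_right _ _
  have hMV : ∀ x ∈ Ω, ‖V x‖ ≤ MV :=
    fun x hx => (hMV₀ x (subset_closure hx)).trans (le_max_left _ _)
  obtain ⟨R, hR⟩ := hΩb.subset_closedBall (0 : EuclideanSpace ℝ (Fin d))
  set K2 : Set (EuclideanSpace ℝ (Fin d)) := Metric.closedBall (0 : EuclideanSpace ℝ (Fin d)) (R + δ * MV) with hK2def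
  have hmem : ∀ x ∈ Ω, ∀ t : ℝ, |t| ≤ δ → x + t • V x ∈ K2 := by
    intro x hx t ht
    rw [hK2def, Metric.mem_closedBall, dist_zero_right]
    have hxR : ‖x‖ ≤ R := by
      have := hR hx
      rwa [Metric.mem_closedBall, dist_zero_right] at this
    calc ‖x + t • V x‖ ≤ ‖x‖ + ‖t • V x‖ := norm_add_le _ _
      _ = ‖x‖ + |t| * ‖V x‖ := by rw [norm_smul, Real.norm_eq_abs]
      _ ≤ R + δ * MV := add_le_add hxR
          (mul_le_mul ht (hMV x hx) (norm_nonneg _) (le_of_lt hδpos))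
  have hK2c : IsCompact K2 := isCompact_closedBall _ _
  obtain ⟨Mf₀, hMf₀⟩ := hK2c.exists_bound_of_continuousOn hf.continuous.continuousOn
  set Mf : ℝ := max Mf₀ 0 with hMfdef
  have hMf0 : (0:ℝ) ≤ Mf := le_max_right _ _
  have hMf : ∀ y ∈ K2, |f y| ≤ Mf := by
    intro y hy
    have := hMf₀ y hy
    rw [Real.norm_eq_abs] at this
    exact this.trans (le_max_left _ _)
  have hfdercont : Continuous (fderiv ℝ f) := hf.continuous_fderiv one_ne_zero
  obtain ⟨Mg₀, hMg₀⟩ := hK2c.exists_bound_of_continuousOn hfdercont.continuousOn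
  set Mg : ℝ := max Mg₀ 0 with hMgdef
  have hMg0 : (0:ℝ) ≤ Mg := le_max_right _ _
  have hMg : ∀ y ∈ K2, ‖fderiv ℝ f y‖ ≤ Mg :=
    fun y hy => (hMg₀ y hy).trans (le_max_left _ _)
  -- bound on the absolute determinant
  have hrow : ∀ (s : ℝ) (x : EuclideanSpace ℝ (Fin d)), |s| ≤ δ → ∀ i, ‖gmat s x i‖ ≤ 2 := by
    intro s x hs i
    rw [pi_norm_le_iff_of_nonneg (by norm_num : (0:ℝ) ≤ 2)]
    intro j
    rw [Real.norm_eq_abs]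
    exact hentry s x i j hs
  have habsdet : ∀ (s : ℝ) (x : EuclideanSpace ℝ (Fin d)), |s| ≤ δ →
      |Matrix.det (1 + s • M x)| ≤ (d.factorial : ℝ) * 2 ^ d := by
    intro s x hs
    have h := detPiBound (gmat s x)
    have h2 : |Matrix.det (1 + s • M x)| ≤ (d.factorial : ℝ) * ∏ i, ‖gmat s x i‖ := by
      rw [← Real.norm_eq_abs]; exact h
    refine h2.trans ?_
    apply mul_le_mul_of_nonneg_left ?_ (by positivity)
    calc ∏ i, ‖gmat s x i‖ ≤ ∏ _i : Fin d, (2:ℝ) :=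
          Finset.prod_le_prod (fun i _ => norm_nonneg _) (fun i _ => hrow s x hs i)
      _ = 2 ^ d := by simp
  -- Lipschitz bound for the f-factor
  have hflip : ∀ x ∈ Ω, ∀ s t : ℝ, |s| ≤ δ → |t| ≤ δ →
      |f (x + t • V x) - f (x + s • V x)| ≤ Mg * MV * |t - s| := by
    intro x hx s t hs ht
    have h := Convex.norm_image_sub_le_of_norm_fderiv_le
      (fun y (_ : y ∈ K2) => hfdiff y) hMg (convex_closedBall _ _)
      (hmem x hx s hs) (hmem x hx t ht)
    rw [Real.norm_eq_abs] at h
    refine h.trans ?_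
    have h2 : x + t • V x - (x + s • V x) = (t - s) • V x := by
      rw [sub_smul]; abel
    rw [h2, norm_smul, Real.norm_eq_abs]
    calc Mg * (|t - s| * ‖V x‖) ≤ Mg * (|t - s| * MV) := by
          apply mul_le_mul_of_nonneg_left ?_ hMg0
          exact mul_le_mul_of_nonneg_left (hMV x hx) (abs_nonneg _)
      _ = Mg * MV * |t - s| := by ring
  -- the parametric integral
  set μ : Measure (EuclideanSpace ℝ (Fin d)) := volume.restrict Ω with hμdef
  haveI : IsFiniteMeasure μ := by
    constructor
    rw [hμdef, Measure.restrict_apply_univ]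
    exact hΩb.measure_lt_top
  set Fn : ℝ → EuclideanSpace ℝ (Fin d) → ℝ := fun t x => f (x + t • V x) * |Matrix.det (1 + t • M x)| with hFn
  set Fn' : EuclideanSpace ℝ (Fin d) → ℝ := fun x => inner ℝ (gradient f x) (V x)
      + f x * LinearMap.trace ℝ (EuclideanSpace ℝ (Fin d))
          ((fderiv ℝ V x : EuclideanSpace ℝ (Fin d) →L[ℝ] EuclideanSpace ℝ (Fin d)) : EuclideanSpace ℝ (Fin d) →ₗ[ℝ] EuclideanSpace ℝ (Fin d)) with hFn'
  set L : ℝ := Mf * Kd + (d.factorial : ℝ) * 2 ^ d * (Mg * MV) with hL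
  have hL0 : 0 ≤ L := by positivity
  -- continuity of M
  have hAcont : Continuous A := hV.continuous_fderiv one_ne_zero
  have hMcont : Continuous M := by
    apply continuous_matrix
    intro i j
    have h1 : ∀ x : EuclideanSpace ℝ (Fin d), M x i j = A x (b j) i := by
      intro x
      simp only [hMdef]
      rw [LinearMap.toMatrix_apply, hbdef,
        OrthonormalBasis.coe_toBasis_repr_apply, EuclideanSpace.basisFun_repr]
      rfl
    simp only [h1]
    have hh : Continuous fun x : EuclideanSpace ℝ (Fin d) => A x (b j) :=
      (ContinuousLinearMap.apply ℝ (EuclideanSpace ℝ (Fin d)) (b j)).continuous.comp hAcont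
    exact (continuous_apply i).comp ((PiLp.continuous_ofLp 2 _).comp hh)
  have hdetcont : ∀ t : ℝ, Continuous fun x : EuclideanSpace ℝ (Fin d) => Matrix.det (1 + t • M x) :=
    fun t => (continuous_const.add (hMcont.const_smul t)).matrix_det
  have hF_meas : ∀ᶠ t in 𝓝 (0:ℝ), AEStronglyMeasurable (Fn t) μ := by
    refine Filter.Eventually.of_forall fun t => ?_
    exact ((hf.continuous.comp (continuous_id.add (hV.continuous.const_smul t))).mul
      ((hdetcont t).abs)).aestronglyMeasurable
  have hF_int : Integrable (Fn 0) μ := by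
    have h0 : Fn 0 = f := by
      funext x
      simp [hFn]
    rw [h0]
    exact hfi.restrict
  have hF'_meas : AEStronglyMeasurable Fn' μ := by
    have hgradcont : Continuous fun x : EuclideanSpace ℝ (Fin d) => gradient f x := by
      have : (fun x : EuclideanSpace ℝ (Fin d) => gradient f x)
          = fun x => (InnerProductSpace.toDual ℝ (EuclideanSpace ℝ (Fin d))).symm
              (fderiv ℝ f x) := rfl
      rw [this]
      exact (LinearIsometryEquiv.continuous _).comp hfdercont
    have htrcont : Continuous fun x : EuclideanSpace ℝ (Fin d) =>
        LinearMap.trace ℝ (EuclideanSpace ℝ (Fin d)) ((fderiv ℝ V x : EuclideanSpace ℝ (Fin d) →L[ℝ] EuclideanSpace ℝ (Fin d)) : EuclideanSpace ℝ (Fin d) →ₗ[ℝ] EuclideanSpace ℝ (Fin d)) := by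
      have h1 : (fun x : EuclideanSpace ℝ (Fin d) => LinearMap.trace ℝ (EuclideanSpace ℝ (Fin d))
          ((fderiv ℝ V x : EuclideanSpace ℝ (Fin d) →L[ℝ] EuclideanSpace ℝ (Fin d)) : EuclideanSpace ℝ (Fin d) →ₗ[ℝ] EuclideanSpace ℝ (Fin d))) = fun x => Matrix.trace (M x) := by
        funext x
        exact (htrace x).symm
      rw [h1]
      exact hMcont.matrix_trace
    exact ((Continuous.inner hgradcont hV.continuous).add
      (hf.continuous.mul htrcont)).aestronglyMeasurable
  have h_lipsch : ∀ᵐ x ∂μ, LipschitzOnWith (Real.nnabs L) (fun t => Fn t x)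
      (Metric.ball (0:ℝ) δ) := by
    rw [hμdef]
    rw [ae_restrict_iff' hΩm]
    refine Filter.Eventually.of_forall fun x hx => ?_
    rw [lipschitzOnWith_iff_dist_le_mul]
    intro t ht s hs
    rw [Metric.mem_ball, Real.dist_eq, sub_zero] at ht hs
    have ht' : |t| ≤ δ := le_of_lt ht
    have hs' : |s| ≤ δ := le_of_lt hs
    rw [Real.dist_eq, Real.dist_eq]
    have key : |Fn t x - Fn s x| ≤ L * |t - s| := by
      have e1 : Fn t x - Fn s x
          = f (x + t • V x) * (|Matrix.det (1 + t • M x)| - |Matrix.det (1 + s • M x)|)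
            + (f (x + t • V x) - f (x + s • V x)) * |Matrix.det (1 + s • M x)| := by
        simp only [hFn]; ring
      rw [e1]
      have b1 : |f (x + t • V x) * (|Matrix.det (1 + t • M x)| - |Matrix.det (1 + s • M x)|)|
          ≤ Mf * (Kd * |t - s|) := by
        rw [abs_mul]
        apply mul_le_mul (hMf _ (hmem x hx t ht')) ?_ (abs_nonneg _) hMf0
        refine (abs_abs_sub_abs_le_abs_sub _ _).trans ?_
        exact hφlip x s t hs' ht'
      have b2 : |(f (x + t • V x) - f (x + s • V x)) * (|Matrix.det (1 + s • M x)|)|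
          ≤ Mg * MV * |t - s| * ((d.factorial : ℝ) * 2 ^ d) := by
        rw [abs_mul, abs_abs]
        exact mul_le_mul (hflip x hx s t hs' ht') (habsdet s x hs') (abs_nonneg _)
          (by positivity)
      refine (abs_add_le _ _).trans ?_
      refine (add_le_add b1 b2).trans ?_
      rw [hL]; ring_nf
      exact le_refl _
    refine key.trans ?_
    apply mul_le_mul_of_nonneg_right ?_ (abs_nonneg _)
    rw [Real.coe_nnabs]
    exact le_abs_self L
  have bound_integrable : Integrable (fun _ : EuclideanSpace ℝ (Fin d) => L) μ := integrable_const L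
  have h_diff : ∀ᵐ x ∂μ, HasDerivAt (fun t => Fn t x) (Fn' x) 0 :=
    Filter.Eventually.of_forall fun x => hFderiv x
  obtain ⟨-, Hmain⟩ := hasDerivAt_integral_of_dominated_loc_of_lip (Metric.ball_mem_nhds 0 hδpos) hF_meas hF_int
    hF'_meas h_lipsch bound_integrable h_diff
  -- change of variables
  have heq : ∀ t : ℝ, |t| ≤ δ →
      (∫ x in (fun x => x + t • V x) '' Ω, f x) = ∫ x, Fn t x ∂μ := by
    intro t ht
    have hder : ∀ x ∈ Ω, HasFDerivWithinAt (fun x : EuclideanSpace ℝ (Fin d) => x + t • V x)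
        (ContinuousLinearMap.id ℝ (EuclideanSpace ℝ (Fin d)) + t • A x) Ω x := by
      intro x _
      exact ((hasFDerivAt_id x).add (((hVdiff x).hasFDerivAt).const_smul t)).hasFDerivWithinAt
    rw [integral_image_eq_integral_abs_det_fderiv_smul volume hΩm hder ((hinj t ht).injOn) f]
    rw [hμdef]
    refine integral_congr_ae (Filter.Eventually.of_forall fun x => ?_)
    show |(ContinuousLinearMap.id ℝ (EuclideanSpace ℝ (Fin d)) + t • A x).det|
        • f (x + t • V x) = Fn t x
    rw [hdet t x, smul_eq_mul, mul_comm]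
  have hev : (fun t : ℝ => ∫ x in (fun x => x + t • V x) '' Ω, f x)
      =ᶠ[𝓝 (0:ℝ)] fun t => ∫ x, Fn t x ∂μ := by
    have hball : ∀ᶠ t : ℝ in 𝓝 0, |t| ≤ δ := by
      filter_upwards [Metric.ball_mem_nhds (0:ℝ) hδpos] with t ht
      rw [Metric.mem_ball, Real.dist_eq, sub_zero] at ht
      exact le_of_lt ht
    filter_upwards [hball] with t ht
    exact heq t ht
  exact Hmain.congr_of_eventuallyEq hev
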